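/- Let d ≥ 1 and let f : ℝ_{>0}^d → ℝ be componentwise subadditive and Lebesgue measurable. Then lim_{n→∞} f(n,…,n)/n^d, taken over positive integers n, exists in ℝ ∪ {−∞} and equals inf_{n ≥ 1} f(n,…,n)/n^d, which in turn equals inf_{x_1,…,x_d > 0} f(x_1,…,x_d)/(x_1⋯x_d). -/

import Mathlib

open Filter MeasureTheory Topology

section FeketeAux

open Finset
open scoped ENNReal

variable {d : ℕ} {f : (Fin d → ℝ) → ℝ}

/-- iterated subadditivity in one coordinate -/
lemma lem0 (hf : ∀ (i : Fin d) (x : Fin d → ℝ) (y : ℝ), (∀ j, 0 < x j) → 0 < y →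
      f (Function.update x i (x i + y)) ≤ f x + f (Function.update x i y))
    (i : Fin d) (x : Fin d → ℝ) (hx : ∀ j, 0 < x j) {y r : ℝ} (hy : 0 < y) (hr : 0 < r) :
    ∀ k : ℕ, f (Function.update x i ((k : ℝ) * y + r)) ≤
      (k : ℝ) * f (Function.update x i y) + f (Function.update x i r) := by
  intro k
  induction k with
  | zero => simp
  | succ k ih =>
      have hz : ∀ j, 0 < Function.update x i ((k : ℝ) * y + r) j := fun j => by
        rcases eq_or_ne j i with h | h
        · subst h; rw [Function.update_self]; positivity
        · rw [Function.update_of_ne h]; exact hx j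
      have h1 := hf i (Function.update x i ((k : ℝ) * y + r)) y hz hy
      rw [Function.update_self, Function.update_idem, Function.update_idem] at h1
      have h2 : ((k : ℝ) * y + r) + y = ((k + 1 : ℕ) : ℝ) * y + r := by push_cast; ring
      rw [h2] at h1
      calc f (Function.update x i (((k + 1 : ℕ) : ℝ) * y + r))
          ≤ f (Function.update x i ((k : ℝ) * y + r)) + f (Function.update x i y) := h1
        _ ≤ ((k : ℝ) * f (Function.update x i y) + f (Function.update x i r))
              + f (Function.update x i y) := by linarith
        _ = ((k + 1 : ℕ) : ℝ) * f (Function.update x i y) + f (Function.update x i r) := by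
              push_cast; ring

/-- multi-coordinate decomposition -/
lemma lem1 (hf : ∀ (i : Fin d) (x : Fin d → ℝ) (y : ℝ), (∀ j, 0 < x j) → 0 < y →
      f (Function.update x i (x i + y)) ≤ f x + f (Function.update x i y))
    (k : Fin d → ℕ) (x r : Fin d → ℝ) (hx : ∀ i, 0 < x i) (hr : ∀ i, 0 < r i) :
    ∀ (T : Finset (Fin d)) (w : Fin d → ℝ), (∀ i, 0 < w i) →
    f (fun i => if i ∈ T then (k i : ℝ) * x i + r i else w i) ≤
      ∑ S ∈ T.powerset, (∏ i ∈ S, (k i : ℝ)) *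
        f (fun i => if i ∈ S then x i else if i ∈ T then r i else w i) := by
  intro T
  induction T using Finset.induction_on with
  | empty => intro w hw; simp
  | @insert a T ha ih =>
      intro w hw
      -- base point Q
      set Q : Fin d → ℝ := fun i => if i ∈ T then (k i : ℝ) * x i + r i else w i with hQ
      have hQpos : ∀ j, 0 < Q j := fun j => by
        simp only [hQ]; split
        · have := hx j; have := hr j; positivity
        · exact hw j
      have hPQ : (fun i => if i ∈ insert a T then (k i : ℝ) * x i + r i else w i) =
          Function.update Q a ((k a : ℝ) * x a + r a) := by
        funext i
        rcases eq_or_ne i a with h | h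
        · subst h; simp [Function.update_self]
        · simp [Function.update_of_ne h, hQ, Finset.mem_insert, h]
      have step := lem0 hf a Q hQpos (hx a) (hr a) (k a)
      -- identify updated points with the two IH points
      have e1 : Function.update Q a (x a) =
          (fun i => if i ∈ T then (k i : ℝ) * x i + r i else (Function.update w a (x a)) i) := by
        funext i
        rcases eq_or_ne i a with h | h
        · rw [h, Function.update_self, Function.update_self]
          simp [ha]
        · simp [Function.update_of_ne h, hQ]
      have e2 : Function.update Q a (r a) =
          (fun i => if i ∈ T then (k i : ℝ) * x i + r i else (Function.update w a (r a)) i) := by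
        funext i
        rcases eq_or_ne i a with h | h
        · rw [h, Function.update_self, Function.update_self]
          simp [ha]
        · simp [Function.update_of_ne h, hQ]
      have hw1 : ∀ i, 0 < Function.update w a (x a) i := fun i => by
        rcases eq_or_ne i a with h | h
        · rw [h, Function.update_self]; exact hx a
        · rw [Function.update_of_ne h]; exact hw i
      have hw2 : ∀ i, 0 < Function.update w a (r a) i := fun i => by
        rcases eq_or_ne i a with h | h
        · rw [h, Function.update_self]; exact hr a
        · rw [Function.update_of_ne h]; exact hw i
      have ih1 := ih (Function.update w a (x a)) hw1
      have ih2 := ih (Function.update w a (r a)) hw2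
      rw [hPQ]
      rw [Finset.sum_powerset_insert ha]
      have key : f (Function.update Q a ((k a : ℝ) * x a + r a)) ≤
          (k a : ℝ) * f (Function.update Q a (x a)) + f (Function.update Q a (r a)) := step
      refine key.trans ?_
      have h2' : f (Function.update Q a (r a)) ≤
          ∑ S ∈ T.powerset, (∏ i ∈ S, (k i : ℝ)) *
            f (fun i => if i ∈ S then x i else if i ∈ insert a T then r i else w i) := by
        rw [e2]
        refine ih2.trans_eq (Finset.sum_congr rfl fun S hS => ?_)
        rw [Finset.mem_powerset] at hS
        congr 1
        congr 1
        funext i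
        rcases eq_or_ne i a with h | h
        · have haS : a ∉ S := fun hiS => ha (hS hiS)
          rw [h]
          simp [haS, ha, Function.update_self]
        · simp [Function.update_of_ne h, Finset.mem_insert, h]
      have h1' : (k a : ℝ) * f (Function.update Q a (x a)) ≤
          ∑ S ∈ T.powerset, (∏ i ∈ insert a S, (k i : ℝ)) *
            f (fun i => if i ∈ insert a S then x i
                else if i ∈ insert a T then r i else w i) := by
        rw [e1]
        calc (k a : ℝ) * f (fun i => if i ∈ T then (k i : ℝ) * x i + r i
                else (Function.update w a (x a)) i)
            ≤ (k a : ℝ) * ∑ S ∈ T.powerset, (∏ i ∈ S, (k i : ℝ)) *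
              f (fun i => if i ∈ S then x i else if i ∈ T then r i
                  else (Function.update w a (x a)) i) := by
              exact mul_le_mul_of_nonneg_left ih1 (Nat.cast_nonneg _)
          _ = ∑ S ∈ T.powerset, (∏ i ∈ insert a S, (k i : ℝ)) *
              f (fun i => if i ∈ insert a S then x i
                  else if i ∈ insert a T then r i else w i) := by
              rw [Finset.mul_sum]
              refine Finset.sum_congr rfl fun S hS => ?_
              rw [Finset.mem_powerset] at hS
              have haS : a ∉ S := fun hiS => ha (hS hiS)
              rw [Finset.prod_insert haS, ← mul_assoc]
              have epoint : (fun i => if i ∈ S then x i else if i ∈ T then r i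
                    else Function.update w a (x a) i) =
                  (fun i => if i ∈ insert a S then x i
                    else if i ∈ insert a T then r i else w i) := by
                funext i
                rcases eq_or_ne i a with h | h
                · rw [h]
                  simp [haS, ha, Function.update_self]
                · simp [Function.update_of_ne h, Finset.mem_insert, h]
              rw [epoint]
      linarith

/-- Steinhaus-type local boundedness -/
lemma lem2 (hf : ∀ (i : Fin d) (x : Fin d → ℝ) (y : ℝ), (∀ j, 0 < x j) → 0 < y →
      f (Function.update x i (x i + y)) ≤ f x + f (Function.update x i y))
    (hmeas : AEMeasurable f (volume.restrict {x : Fin d → ℝ | ∀ i, 0 < x i}))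
    (x : Fin d → ℝ) (hx : ∀ i, 0 < x i) :
    ∃ C : ℝ, ∀ t : Fin d → ℝ, (∀ i, t i ∈ Set.Icc (x i) (2 * x i)) → f t ≤ C := by
  classical
  set B : Set (Fin d → ℝ) := Set.univ.pi (fun i => Set.Ioo 0 (2 * x i)) with hB
  have hBmeas : MeasurableSet B := MeasurableSet.univ_pi fun i => measurableSet_Ioo
  have hBsub : B ⊆ {x : Fin d → ℝ | ∀ i, 0 < x i} := by
    intro y hy i
    exact (hy i (Set.mem_univ i)).1
  have hmeasB : AEMeasurable f (volume.restrict B) :=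
    hmeas.mono_measure (Measure.restrict_mono hBsub le_rfl)
  set g : (Fin d → ℝ) → ℝ := hmeasB.mk f with hg
  have hgmeas : Measurable g := hmeasB.measurable_mk
  have hfg : f =ᵐ[volume.restrict B] g := hmeasB.ae_eq_mk
  -- the null set where f ≠ g, intersected with B
  set N : Set (Fin d → ℝ) := {y | f y ≠ g y} ∩ B with hN
  have hNnull : volume N = 0 := by
    have := hfg
    rw [Filter.EventuallyEq, ae_iff, Measure.restrict_apply'] at this
    · exact this
    · exact hBmeas
  -- volumes of boxes
  set D : Set (Fin d → ℝ) := Set.univ.pi (fun i => Set.Ioo 0 (x i)) with hD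
  have hvolD : volume D = ∏ i, ENNReal.ofReal (x i) := by
    rw [hD, volume_pi_pi]
    simp [Real.volume_Ioo]
  have hvolB : volume B = ∏ i, ENNReal.ofReal (2 * x i) := by
    rw [hB, volume_pi_pi]
    simp [Real.volume_Ioo]
  have hvolDpos : 0 < volume D := by
    rw [hvolD]
    rw [CanonicallyOrderedAdd.prod_pos]
    intro i _
    simp [ENNReal.ofReal_pos, hx i]
  have hvolDne : volume D ≠ ∞ := by
    rw [hvolD]
    exact (ENNReal.prod_lt_top fun i _ => ENNReal.ofReal_lt_top).ne
  have hvolBne : volume B ≠ ∞ := by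
    rw [hvolB]
    exact (ENNReal.prod_lt_top fun i _ => ENNReal.ofReal_lt_top).ne
  set δ : ℝ≥0∞ := volume D / 2 ^ d with hδ
  have hδpos : 0 < δ := ENNReal.div_pos hvolDpos.ne' (by simp)
  -- choose M
  set A : ℕ → Set (Fin d → ℝ) := fun M => B ∩ {y | (M : ℝ) < g y} with hA
  have hAmeas : ∀ M, MeasurableSet (A M) :=
    fun M => hBmeas.inter (measurableSet_lt measurable_const hgmeas)
  have hAanti : Antitone A := by
    intro M M' hMM' y hy
    refine ⟨hy.1, ?_⟩
    have h2 : (M' : ℝ) < g y := hy.2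
    exact lt_of_le_of_lt (Nat.cast_le.mpr hMM') h2
  have hAempty : ⋂ M, A M = ∅ := by
    ext y
    simp only [Set.mem_iInter, Set.mem_empty_iff_false, iff_false, not_forall]
    obtain ⟨M, hM⟩ := exists_nat_gt (g y)
    exact ⟨M, fun h => absurd h.2 (not_lt.2 hM.le)⟩
  have htend : Tendsto (volume ∘ A) atTop (𝓝 0) := by
    have := tendsto_measure_iInter_atTop (μ := volume)
      (fun M => (hAmeas M).nullMeasurableSet) hAanti
      ⟨0, ((measure_mono (Set.inter_subset_left)).trans_lt
        (lt_of_le_of_ne le_top hvolBne)).ne⟩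
    rwa [hAempty, measure_empty] at this
  obtain ⟨M, hM⟩ : ∃ M : ℕ, volume (A M) < δ :=
    (htend.eventually_lt_const hδpos).exists
  refine ⟨2 ^ d * M, ?_⟩
  intro t ht
  -- bad sets
  set Bad : Set (Fin d → ℝ) := A M ∪ N with hBad
  have hBadnm : NullMeasurableSet Bad volume :=
    ((hAmeas M).nullMeasurableSet).union (NullMeasurableSet.of_null hNnull)
  have hBadlt : volume Bad < δ := by
    calc volume Bad ≤ volume (A M) + volume N := measure_union_le _ _
      _ = volume (A M) := by rw [hNnull, add_zero]
      _ < δ := hM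
  set φ : Finset (Fin d) → (Fin d → ℝ) → (Fin d → ℝ) :=
    fun S s i => if i ∈ S then s i else t i - s i with hφ
  have hφmp : ∀ S, MeasurePreserving (φ S) volume volume := by
    intro S
    have : ∀ i : Fin d, MeasurePreserving
        (fun y : ℝ => if i ∈ S then y else t i - y) volume volume := by
      intro i
      by_cases h : i ∈ S
      · simp only [h, if_true]; exact MeasurePreserving.id (volume : Measure ℝ)
      · have h1 := measurePreserving_add_left (volume : Measure ℝ) (t i)
        have h2 := Measure.measurePreserving_neg (volume : Measure ℝ)
        simp only [h, if_false, sub_eq_add_neg]; exact h1.comp h2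
    exact volume_preserving_pi this
  -- s ∈ D implies φ S s ∈ B
  have hφB : ∀ S, ∀ s ∈ D, φ S s ∈ B := by
    intro S s hs
    intro i _
    have hsi := hs i (Set.mem_univ i)
    have ht1 := (ht i).1
    have ht2 := (ht i).2
    have hs1 := hsi.1
    have hs2 := hsi.2
    have hxi := hx i
    simp only [hφ, Set.mem_Ioo]
    constructor
    · split
      · exact hs1
      · linarith
    · split
      · linarith
      · linarith
  set bad : Finset (Fin d) → Set (Fin d → ℝ) := fun S => D ∩ (φ S) ⁻¹' Bad with hbad
  have hbadle : ∀ S, volume (bad S) ≤ volume Bad := by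
    intro S
    calc volume (bad S) ≤ volume ((φ S) ⁻¹' Bad) := measure_mono Set.inter_subset_right
      _ = volume Bad := (hφmp S).measure_preimage hBadnm
  -- find a good point s
  have hex : ∃ s, s ∈ D ∧ ∀ S : Finset (Fin d), φ S s ∉ Bad := by
    by_contra hcon
    push_neg at hcon
    have hsub : D ⊆ ⋃ S : Finset (Fin d), bad S := by
      intro s hs
      obtain ⟨S, hS⟩ := hcon s hs
      exact Set.mem_iUnion.2 ⟨S, hs, hS⟩
    have h1 : volume D ≤ ∑' S : Finset (Fin d), volume (bad S) :=
      (measure_mono hsub).trans (measure_iUnion_le _)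
    have h2 : ∑' S : Finset (Fin d), volume (bad S) ≤
        (2 ^ d : ℝ≥0∞) * volume Bad := by
      rw [tsum_fintype]
      calc ∑ S : Finset (Fin d), volume (bad S) ≤
          ∑ _S : Finset (Fin d), volume Bad := Finset.sum_le_sum fun S _ => hbadle S
        _ = (Fintype.card (Finset (Fin d)) : ℝ≥0∞) * volume Bad := by
            rw [Finset.sum_const, Finset.card_univ, nsmul_eq_mul]
        _ = (2 ^ d : ℝ≥0∞) * volume Bad := by
            rw [Fintype.card_finset, Fintype.card_fin]
            push_cast
            ring
    have h3 : (2 ^ d : ℝ≥0∞) * volume Bad < (2 ^ d : ℝ≥0∞) * δ :=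
      ENNReal.mul_lt_mul_right (by norm_num) (by simp) hBadlt
    have h4 : (2 ^ d : ℝ≥0∞) * δ = volume D := by
      rw [hδ]
      exact ENNReal.mul_div_cancel' (by norm_num) (by simp)
    exact lt_irrefl _ (lt_of_le_of_lt (h1.trans h2) (h3.trans_eq h4))
  obtain ⟨s, hsD, hsgood⟩ := hex
  have hsval : ∀ S : Finset (Fin d), f (φ S s) ≤ M := by
    intro S
    have hmem : φ S s ∈ B := hφB S s hsD
    have hnA : φ S s ∉ A M := fun h => hsgood S (Set.mem_union_left _ h)
    have hnN : φ S s ∉ N := fun h => hsgood S (Set.mem_union_right _ h)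
    have hg_le : g (φ S s) ≤ M := by
      by_contra hlt
      exact hnA ⟨hmem, lt_of_not_ge hlt⟩
    have hfg_eq : f (φ S s) = g (φ S s) := by
      by_contra hne
      exact hnN ⟨hne, hmem⟩
    rw [hfg_eq]; exact hg_le
  -- now apply lem1 with k = 1
  have hspos : ∀ i, 0 < s i := fun i => (hsD i (Set.mem_univ i)).1
  have hrpos : ∀ i, 0 < t i - s i := by
    intro i
    have := (hsD i (Set.mem_univ i)).2
    have := (ht i).1
    linarith
  have happ := lem1 hf (fun _ => 1) s (fun i => t i - s i) hspos hrpos Finset.univ s hspos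
  have hpt : (fun i => if i ∈ (Finset.univ : Finset (Fin d)) then
      ((1 : ℕ) : ℝ) * s i + (t i - s i) else s i) = t := by
    funext i
    simp
  rw [hpt] at happ
  have hsum : ∑ S ∈ (Finset.univ : Finset (Fin d)).powerset,
      (∏ i ∈ S, ((1 : ℕ) : ℝ)) *
        f (fun i => if i ∈ S then s i else if i ∈ (Finset.univ : Finset (Fin d))
          then t i - s i else s i) ≤ 2 ^ d * M := by
    calc ∑ S ∈ (Finset.univ : Finset (Fin d)).powerset,
        (∏ i ∈ S, ((1 : ℕ) : ℝ)) *
          f (fun i => if i ∈ S then s i else if i ∈ (Finset.univ : Finset (Fin d))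
            then t i - s i else s i)
        ≤ ∑ _S ∈ (Finset.univ : Finset (Fin d)).powerset, (M : ℝ) := by
          refine Finset.sum_le_sum fun S _ => ?_
          have : (fun i => if i ∈ S then s i else if i ∈ (Finset.univ : Finset (Fin d))
              then t i - s i else s i) = φ S s := by
            funext i
            simp [hφ]
          rw [this]
          simpa using hsval S
      _ = ((Finset.univ : Finset (Fin d)).powerset.card : ℝ) * M := by
          rw [Finset.sum_const, nsmul_eq_mul]
      _ = 2 ^ d * M := by
          rw [Finset.card_powerset, Finset.card_univ, Fintype.card_fin]
          push_cast; ring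
  exact happ.trans hsum

lemma lem3 (hd : 1 ≤ d)
    (hf : ∀ (i : Fin d) (x : Fin d → ℝ) (y : ℝ), (∀ j, 0 < x j) → 0 < y →
      f (Function.update x i (x i + y)) ≤ f x + f (Function.update x i y))
    (hmeas : AEMeasurable f (volume.restrict {x : Fin d → ℝ | ∀ i, 0 < x i}))
    (x : Fin d → ℝ) (hx : ∀ i, 0 < x i) {ε : ℝ} (hε : 0 < ε) :
    ∀ᶠ n : ℕ in atTop, f (fun _ => (n : ℝ)) / (n : ℝ) ^ d ≤ f x / (∏ i, x i) + ε := by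
  classical
  obtain ⟨C, hC⟩ := lem2 hf hmeas x hx
  set C' : ℝ := max C 0 with hC'
  set k : ℕ → Fin d → ℕ := fun n i => ⌊(n : ℝ) / x i⌋₊ - 1 with hk
  set G : ℕ → ℝ := fun n => ∑ S ∈ (Finset.univ : Finset (Fin d)).powerset,
    (∏ i ∈ S, ((k n i : ℝ) / n)) * (1 / (n : ℝ)) ^ (d - S.card) *
      (if S = Finset.univ then f x else C') with hG
  -- limit of G
  have hki : ∀ i : Fin d, Tendsto (fun n : ℕ => (k n i : ℝ) / n) atTop (𝓝 (x i)⁻¹) := by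
    intro i
    have hxi := hx i
    have hkey : ∀ n : ℕ, 1 ≤ n → ((n : ℝ) / x i) / n = (x i)⁻¹ := by
      intro n hn
      have hn0 : (0 : ℝ) < n := by exact_mod_cast hn
      rw [div_div, mul_comm, ← div_div, div_self hn0.ne', one_div]
    have hup : ∀ᶠ n : ℕ in atTop, (k n i : ℝ) / n ≤ (x i)⁻¹ := by
      filter_upwards [eventually_ge_atTop 1] with n hn
      have hn0 : (0 : ℝ) < n := by exact_mod_cast hn
      have h1 : (k n i : ℝ) ≤ (n : ℝ) / x i := by
        have h2 : (k n i : ℝ) ≤ (⌊(n : ℝ) / x i⌋₊ : ℝ) := by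
          exact_mod_cast Nat.sub_le _ 1
        exact h2.trans (Nat.floor_le (div_nonneg (Nat.cast_nonneg n) hxi.le))
      calc (k n i : ℝ) / n ≤ ((n : ℝ) / x i) / n := by gcongr
        _ = (x i)⁻¹ := hkey n hn
    have hlo : ∀ᶠ n : ℕ in atTop, (x i)⁻¹ - 2 / n ≤ (k n i : ℝ) / n := by
      filter_upwards [eventually_ge_atTop 1] with n hn
      have hn0 : (0 : ℝ) < n := by exact_mod_cast hn
      have h1 : (n : ℝ) / x i - 2 ≤ (k n i : ℝ) := by
        have hfl : (n : ℝ) / x i < (⌊(n : ℝ) / x i⌋₊ : ℝ) + 1 := Nat.lt_floor_add_one _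
        have h2 : ((⌊(n : ℝ) / x i⌋₊ : ℝ)) - 1 ≤ (k n i : ℝ) := by
          rcases Nat.eq_zero_or_pos ⌊(n : ℝ) / x i⌋₊ with h | h
          · simp [hk, h]
          · have he : (k n i : ℝ) = (⌊(n : ℝ) / x i⌋₊ : ℝ) - 1 := by
              rw [hk]
              rw [Nat.cast_sub h]
              norm_num
            linarith [he.ge]
        linarith
      calc (x i)⁻¹ - 2 / n = ((n : ℝ) / x i - 2) / n := by
            rw [sub_div, hkey n hn]
        _ ≤ (k n i : ℝ) / n := by gcongr
    have hlim : Tendsto (fun n : ℕ => (x i)⁻¹ - 2 / (n : ℝ)) atTop (𝓝 ((x i)⁻¹)) := by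
      have : Tendsto (fun n : ℕ => 2 / (n : ℝ)) atTop (𝓝 0) := by
        simpa using (tendsto_const_div_atTop_nhds_zero_nat 2)
      simpa using tendsto_const_nhds.sub this
    exact tendsto_of_tendsto_of_tendsto_of_le_of_le' hlim tendsto_const_nhds hlo hup
  have hGlim : Tendsto G atTop (𝓝 (f x / ∏ i, x i)) := by
    have hterm : ∀ S ∈ (Finset.univ : Finset (Fin d)).powerset,
        Tendsto (fun n : ℕ => (∏ i ∈ S, ((k n i : ℝ) / n)) * (1 / (n : ℝ)) ^ (d - S.card) *
          (if S = Finset.univ then f x else C')) atTop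
          (𝓝 ((∏ i ∈ S, (x i)⁻¹) * (if S = Finset.univ then (1 : ℝ) else 0) *
            (if S = Finset.univ then f x else C'))) := by
      intro S _
      refine Tendsto.mul_const _ (Tendsto.mul ?_ ?_)
      · exact tendsto_finset_prod S fun i _ => hki i
      · by_cases h : S = Finset.univ
        · subst h
          have hc : d - (Finset.univ : Finset (Fin d)).card = 0 := by
            simp [Finset.card_univ]
          rw [if_pos rfl, hc]
          simpa using tendsto_const_nhds (α := ℝ) (f := atTop (α := ℕ))
        · have hcard : S.card < d := by
            have h1 : S.card ≤ d := by
              simpa using Finset.card_le_card (Finset.subset_univ S)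
            rcases lt_or_eq_of_le h1 with h2 | h2
            · exact h2
            · exfalso
              apply h
              apply Finset.eq_univ_of_card
              simpa using h2
          have hpow : Tendsto (fun n : ℕ => (1 / (n : ℝ)) ^ (d - S.card)) atTop
              (𝓝 ((0 : ℝ) ^ (d - S.card))) :=
            (tendsto_one_div_atTop_nhds_zero_nat).pow _
          rw [zero_pow (by omega)] at hpow
          simpa [h] using hpow
    have := tendsto_finset_sum _ hterm
    have hsum : ∑ S ∈ (Finset.univ : Finset (Fin d)).powerset,
        ((∏ i ∈ S, (x i)⁻¹) * (if S = Finset.univ then (1 : ℝ) else 0) *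
          (if S = Finset.univ then f x else C')) = f x / ∏ i, x i := by
      rw [Finset.sum_eq_single_of_mem (Finset.univ : Finset (Fin d))
        (Finset.mem_powerset_self _)]
      · simp [Finset.prod_inv_distrib, div_eq_mul_inv, mul_comm]
      · intro S _ hS
        simp [hS]
    rwa [hsum] at this
  -- eventual inequality  f(const n)/n^d ≤ G n
  have hineq : ∀ᶠ n : ℕ in atTop, f (fun _ => (n : ℝ)) / (n : ℝ) ^ d ≤ G n := by
    have hev : ∀ᶠ n : ℕ in atTop, (∀ i, 2 * x i ≤ (n : ℝ)) ∧ 1 ≤ n := by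
      refine Filter.Eventually.and ?_ (eventually_ge_atTop 1)
      exact Filter.eventually_all.2 fun i =>
        tendsto_natCast_atTop_atTop.eventually_ge_atTop (2 * x i)
    filter_upwards [hev] with n hn
    obtain ⟨hn2, hn1⟩ := hn
    have hn0 : (0 : ℝ) < n := by exact_mod_cast hn1
    -- facts about k and r
    have hfl2 : ∀ i, 2 ≤ ⌊(n : ℝ) / x i⌋₊ := by
      intro i
      have h2 : ((2 : ℕ) : ℝ) ≤ (n : ℝ) / x i := by
        rw [le_div_iff₀ (hx i)]
        push_cast
        linarith [hn2 i]
      exact Nat.le_floor h2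
    have hkcast : ∀ i, (k n i : ℝ) = (⌊(n : ℝ) / x i⌋₊ : ℝ) - 1 := by
      intro i
      have hle : 1 ≤ ⌊(n : ℝ) / x i⌋₊ := le_trans (by norm_num) (hfl2 i)
      rw [hk]
      rw [Nat.cast_sub hle]
      norm_num
    set r : Fin d → ℝ := fun i => (n : ℝ) - (k n i : ℝ) * x i with hrdef
    have hrlb : ∀ i, x i ≤ r i := by
      intro i
      have h1 : (⌊(n : ℝ) / x i⌋₊ : ℝ) * x i ≤ (n : ℝ) := by
        rw [← le_div_iff₀ (hx i)]
        exact Nat.floor_le (div_nonneg (Nat.cast_nonneg n) (hx i).le)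
      rw [hrdef]
      simp only [hkcast i]
      nlinarith [hx i]
    have hrub : ∀ i, r i ≤ 2 * x i := by
      intro i
      have h1 : (n : ℝ) / x i < (⌊(n : ℝ) / x i⌋₊ : ℝ) + 1 := Nat.lt_floor_add_one _
      have h2 : (n : ℝ) < ((⌊(n : ℝ) / x i⌋₊ : ℝ) + 1) * x i := by
        rw [← div_lt_iff₀ (hx i)]
        exact h1
      rw [hrdef]
      simp only [hkcast i]
      nlinarith [hx i]
    have hrpos : ∀ i, 0 < r i := fun i => lt_of_lt_of_le (hx i) (hrlb i)
    have happ := lem1 hf (k n) x r hx hrpos Finset.univ x hx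
    have hpt : (fun i => if i ∈ (Finset.univ : Finset (Fin d)) then
        (k n i : ℝ) * x i + r i else x i) = (fun _ => (n : ℝ)) := by
      funext i
      simp [hrdef]
    rw [hpt] at happ
    -- termwise bound, then divide
    have hterm : ∀ S ∈ (Finset.univ : Finset (Fin d)).powerset,
        (∏ i ∈ S, (k n i : ℝ)) * f (fun i => if i ∈ S then x i
          else if i ∈ (Finset.univ : Finset (Fin d)) then r i else x i) ≤
        (∏ i ∈ S, (k n i : ℝ)) * (if S = Finset.univ then f x else C') := by
      intro S _
      have hprodnn : 0 ≤ ∏ i ∈ S, (k n i : ℝ) :=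
        Finset.prod_nonneg fun i _ => Nat.cast_nonneg _
      refine mul_le_mul_of_nonneg_left ?_ hprodnn
      by_cases h : S = Finset.univ
      · subst h
        have : (fun i => if i ∈ (Finset.univ : Finset (Fin d)) then x i
            else if i ∈ (Finset.univ : Finset (Fin d)) then r i else x i) = x := by
          funext i; simp
        rw [this]
        simp
      · simp only [h, if_false]
        refine le_trans (hC _ ?_) (le_max_left _ _)
        intro i
        by_cases hiS : i ∈ S
        · simp only [hiS, if_true]
          constructor
          · exact le_refl _
          · nlinarith [hx i]
        · simp only [hiS, if_false, Finset.mem_univ, if_true]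
          exact ⟨hrlb i, hrub i⟩
    have hsumle := happ.trans (Finset.sum_le_sum hterm)
    have hdiv : (∑ S ∈ (Finset.univ : Finset (Fin d)).powerset,
        (∏ i ∈ S, (k n i : ℝ)) * (if S = Finset.univ then f x else C')) / (n : ℝ) ^ d
        = G n := by
      rw [hG, Finset.sum_div]
      refine Finset.sum_congr rfl fun S hS => ?_
      have hcard : S.card ≤ d := by
        simpa using Finset.card_le_card (Finset.subset_univ S)
      have h2 : S.card + (d - S.card) = d := by omega
      have h1 : ∏ i ∈ S, ((k n i : ℝ) / n) =
          (∏ i ∈ S, (k n i : ℝ)) * ((1 : ℝ) / n) ^ S.card := by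
        rw [Finset.prod_div_distrib, Finset.prod_const, div_pow, one_pow]
        ring
      have h3 : ((1 : ℝ) / n) ^ S.card * ((1 : ℝ) / n) ^ (d - S.card) = ((1 : ℝ) / n) ^ d := by
        rw [← pow_add, h2]
      have h4 : ((1 : ℝ) / n) ^ d = ((n : ℝ) ^ d)⁻¹ := by rw [one_div, inv_pow]
      calc (∏ i ∈ S, (k n i : ℝ)) * (if S = Finset.univ then f x else C') / (n : ℝ) ^ d
          = (∏ i ∈ S, (k n i : ℝ)) * (((1 : ℝ) / n) ^ S.card * ((1 : ℝ) / n) ^ (d - S.card)) *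
            (if S = Finset.univ then f x else C') := by
            rw [h3, h4]; ring
        _ = (∏ i ∈ S, ((k n i : ℝ) / n)) * ((1 : ℝ) / n) ^ (d - S.card) *
            (if S = Finset.univ then f x else C') := by rw [h1]; ring
    calc f (fun _ => (n : ℝ)) / (n : ℝ) ^ d
        ≤ (∑ S ∈ (Finset.univ : Finset (Fin d)).powerset,
          (∏ i ∈ S, (k n i : ℝ)) * (if S = Finset.univ then f x else C')) / (n : ℝ) ^ d := by
          apply div_le_div_of_nonneg_right hsumle
          positivity
      _ = G n := hdiv
  have hlt : f x / ∏ i, x i < f x / ∏ i, x i + ε := by linarith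
  filter_upwards [hineq, hGlim.eventually_le_const hlt] with n h1 h2
  exact h1.trans h2

lemma ereal_le_of_forall (A : EReal) (v : ℝ) (h : ∀ ε : ℝ, 0 < ε → A ≤ ((v + ε : ℝ) : EReal)) :
    A ≤ (v : EReal) := by
  by_contra hcon
  push_neg at hcon
  have hAne : A ≠ ⊤ := by
    intro htop
    have := h 1 one_pos
    rw [htop] at this
    exact (EReal.coe_ne_top (v + 1)) (top_le_iff.1 this)
  have hAbot : (⊥ : EReal) < A := lt_of_le_of_lt bot_le hcon
  have hA : A = ((A.toReal : ℝ) : EReal) := (EReal.coe_toReal hAne hAbot.ne').symm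
  have hreal : ∀ ε : ℝ, 0 < ε → A.toReal ≤ v + ε := by
    intro ε hε
    have := h ε hε
    rw [hA] at this
    exact_mod_cast this
  have : A.toReal ≤ v := le_of_forall_pos_le_add hreal
  rw [hA] at hcon
  exact absurd (EReal.coe_le_coe_iff.2 this) (not_le.2 (by exact_mod_cast hcon))

end FeketeAux

/-- Let `f` be componentwise subadditive and Lebesgue measurable on the positive
orthant of `ℝ^d`.  Then `f(n,…,n)/n^d`, taken over positive integers `n`, converges
in `ℝ ∪ {−∞}` to `inf_{n ≥ 1} f(n,…,n)/n^d`, which in turn equals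
`inf_{x₁,…,x_d > 0} f(x₁,…,x_d)/(x₁⋯x_d)`. -/
theorem fekete_lemma_along_diagonal
    (d : ℕ) (hd : 1 ≤ d) (f : (Fin d → ℝ) → ℝ)
    (hf : ∀ (i : Fin d) (x : Fin d → ℝ) (y : ℝ), (∀ j, 0 < x j) → 0 < y →
      f (Function.update x i (x i + y)) ≤ f x + f (Function.update x i y))
    (hmeas : AEMeasurable f (volume.restrict {x : Fin d → ℝ | ∀ i, 0 < x i})) :
    Tendsto (fun n : ℕ =>
        ((f (fun _ => (n : ℝ)) / (n : ℝ) ^ d : ℝ) : EReal)) atTop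
      (𝓝 (⨅ n ∈ {n : ℕ | 1 ≤ n},
        ((f (fun _ => (n : ℝ)) / (n : ℝ) ^ d : ℝ) : EReal))) ∧
    (⨅ n ∈ {n : ℕ | 1 ≤ n},
        ((f (fun _ => (n : ℝ)) / (n : ℝ) ^ d : ℝ) : EReal)) =
      (⨅ x ∈ {x : Fin d → ℝ | ∀ i, 0 < x i}, ((f x / ∏ i, x i : ℝ) : EReal)) := by
  set a : ℕ → ℝ := fun n => f (fun _ => (n : ℝ)) / (n : ℝ) ^ d with ha
  set L : EReal := ⨅ n ∈ {n : ℕ | 1 ≤ n}, ((a n : ℝ) : EReal) with hL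
  -- the constant diagonal point
  have hconst : ∀ m : ℕ, 1 ≤ m → (∀ i : Fin d, (0 : ℝ) < (fun _ => (m : ℝ)) i) ∧
      f (fun _ => (m : ℝ)) / (∏ i : Fin d, (fun _ => (m : ℝ)) i) = a m := by
    intro m hm
    constructor
    · intro i
      show (0 : ℝ) < (m : ℝ)
      exact_mod_cast hm
    · rw [ha]
      congr 1
      rw [Finset.prod_const, Finset.card_univ, Fintype.card_fin]
  -- key approximation: ∀ m ≥ 1, ∀ ε > 0, eventually a n ≤ a m + ε
  have hkey : ∀ m : ℕ, 1 ≤ m → ∀ ε : ℝ, 0 < ε →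
      ∀ᶠ n : ℕ in atTop, a n ≤ a m + ε := by
    intro m hm ε hε
    obtain ⟨hpos, heq⟩ := hconst m hm
    have := lem3 hd hf hmeas (fun _ => (m : ℝ)) hpos hε
    rw [heq] at this
    exact this
  have hLle : ∀ n : ℕ, 1 ≤ n → L ≤ ((a n : ℝ) : EReal) := by
    intro n hn
    exact iInf₂_le n hn
  -- Part 1: tendsto
  have hten : Tendsto (fun n : ℕ => ((a n : ℝ) : EReal)) atTop (𝓝 L) := by
    rw [tendsto_order]
    constructor
    · intro c hc
      filter_upwards [eventually_ge_atTop 1] with n hn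
      exact lt_of_lt_of_le hc (hLle n hn)
    · intro c hc
      by_cases hctop : c = ⊤
      · subst hctop
        filter_upwards with n
        exact EReal.coe_lt_top _
      · have hcbot : c ≠ ⊥ := (lt_of_le_of_lt bot_le hc).ne'
        obtain ⟨m, hm, hmc⟩ : ∃ m : ℕ, 1 ≤ m ∧ ((a m : ℝ) : EReal) < c := by
          by_contra hcon
          push_neg at hcon
          have : c ≤ L := le_iInf₂ fun n hn => hcon n hn
          exact absurd hc (not_lt.2 this)
        have hcreal : c = ((c.toReal : ℝ) : EReal) := (EReal.coe_toReal hctop hcbot).symm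
        have hmc' : a m < c.toReal := by
          rw [hcreal] at hmc
          exact_mod_cast hmc
        have hεpos : 0 < (c.toReal - a m) / 2 := by linarith
        filter_upwards [hkey m hm _ hεpos] with n hn
        have : a n < c.toReal := by
          have h2 : a m + (c.toReal - a m) / 2 < c.toReal := by linarith
          linarith [hn]
        rw [hcreal]
        exact_mod_cast this
  refine ⟨hten, ?_⟩
  -- Part 2: equality of infima
  apply le_antisymm
  · -- L ≤ I
    refine le_iInf₂ fun x hx => ?_
    refine ereal_le_of_forall L (f x / ∏ i, x i) fun ε hε => ?_
    have hev := lem3 hd hf hmeas x hx hε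
    obtain ⟨n, hn1, hn2⟩ := (hev.and (eventually_ge_atTop 1)).exists
    calc L ≤ ((a n : ℝ) : EReal) := hLle n hn2
      _ ≤ ((f x / ∏ i, x i + ε : ℝ) : EReal) := EReal.coe_le_coe_iff.2 hn1
  · -- I ≤ L
    refine le_iInf₂ fun n hn => ?_
    have hn' : 1 ≤ n := hn
    obtain ⟨hpos, heq⟩ := hconst n hn'
    calc (⨅ x ∈ {x : Fin d → ℝ | ∀ i, 0 < x i}, ((f x / ∏ i, x i : ℝ) : EReal))
        ≤ ((f (fun _ => (n : ℝ)) / ∏ i : Fin d, (fun _ => (n : ℝ)) i : ℝ) : EReal) :=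
          iInf₂_le (fun _ => (n : ℝ)) hpos
      _ = ((a n : ℝ) : EReal) := by rw [heq]
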